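/- arXiv:1702.08321 — 3 statements merged into one kernel-verified Lean document; each statement's English description precedes it below -/
import Mathlib

section
/- For all positive integers q, n, ∏_{k=1}^{∞} (F_{4n(k+q)} + F_{4nq})/(F_{4n(k+q)} - F_{4nq}) = (1/5^q) · ∏_{k=1}^{2q} L_{2nk}/F_{2nk}. -/
open Real Filter Topology Finset
open scoped goldenRatio

def lucas : ℕ → ℕ
  | 0 => 2
  | 1 => 1
  | n + 2 => lucas n + lucas (n + 1)


lemma lucas_real : ∀ m : ℕ, (lucas m : ℝ) = φ ^ m + ψ ^ m
  | 0 => by norm_num [lucas]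
  | 1 => by norm_num [lucas, goldenRatio_add_goldenConj]
  | (m + 2) => by
      have h1 := lucas_real m
      have h2 := lucas_real (m + 1)
      show ((lucas m + lucas (m+1) : ℕ) : ℝ) = _
      push_cast
      rw [h1, h2]
      have hg : φ ^ (m + 2) = φ ^ (m+1) + φ ^ m := by
        calc φ ^ (m+2) = φ ^ m * φ ^ 2 := by ring
        _ = φ ^ m * (φ + 1) := by rw [goldenRatio_sq]
        _ = _ := by ring
      have hc : ψ ^ (m + 2) = ψ ^ (m+1) + ψ ^ m := by
        calc ψ ^ (m+2) = ψ ^ m * ψ ^ 2 := by ring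
        _ = ψ ^ m * (ψ + 1) := by rw [goldenConj_sq]
        _ = _ := by ring
      rw [hg, hc]; ring

lemma lucas_pos : ∀ m : ℕ, 0 < lucas m
  | 0 => by norm_num [lucas]
  | 1 => by norm_num [lucas]
  | (m + 2) => by
      have := lucas_pos m
      show 0 < lucas m + lucas (m+1)
      omega

lemma gold_pow_mul_goldConj_pow {e : ℕ} (he : Even e) : φ ^ e * ψ ^ e = 1 := by
  rw [← mul_pow, goldenRatio_mul_goldenConj, he.neg_one_pow]

lemma fib_add_eq {a e : ℕ} (he : Even e) :
    (Nat.fib (a + 2 * e) : ℝ) + Nat.fib a = Nat.fib (a + e) * lucas e := by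
  have h1 := gold_pow_mul_goldConj_pow he
  have h5 : Real.sqrt 5 ≠ 0 := by positivity
  rw [Real.coe_fib_eq, Real.coe_fib_eq, Real.coe_fib_eq, lucas_real,
    show a + 2 * e = a + e + e by ring, pow_add, pow_add, pow_add, pow_add]
  linear_combination ((goldenConj ^ a - goldenRatio ^ a) / √5) * h1

lemma fib_sub_eq {a e : ℕ} (he : Even e) :
    (Nat.fib (a + 2 * e) : ℝ) - Nat.fib a = lucas (a + e) * Nat.fib e := by
  have h1 := gold_pow_mul_goldConj_pow he
  have h5 : Real.sqrt 5 ≠ 0 := by positivity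
  rw [Real.coe_fib_eq, Real.coe_fib_eq, lucas_real, Real.coe_fib_eq,
    show a + 2 * e = a + e + e by ring, pow_add, pow_add, pow_add, pow_add]
  linear_combination ((goldenRatio ^ a - goldenConj ^ a) / √5) * h1

lemma hasProd_of_one_le_of_tendsto {f : ℕ → ℝ} (h1 : ∀ k, 1 ≤ f k) {L : ℝ}
    (hL : Tendsto (fun K => ∏ k ∈ Finset.range K, f k) atTop (𝓝 L)) : HasProd f L := by
  have h0 : ∀ k, 0 ≤ f k := fun k => le_trans zero_le_one (h1 k)
  set F : ℕ → NNReal := fun k => ⟨f k, h0 k⟩ with hF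
  have h1' : ∀ k, 1 ≤ F k := fun k => by
    rw [← NNReal.coe_le_coe]; exact h1 k
  have hcoe : ∀ s : Finset ℕ, ((∏ k ∈ s, F k : NNReal) : ℝ) = ∏ k ∈ s, f k := by
    intro s; push_cast; rfl
  have hL1 : (1:ℝ) ≤ L := by
    refine ge_of_tendsto' hL fun K => ?_
    rw [← hcoe]
    exact_mod_cast Finset.one_le_prod' fun i _ => h1' i
  set L' : NNReal := ⟨L, le_trans zero_le_one hL1⟩ with hL'
  have hmonoF : Monotone fun K => ∏ k ∈ Finset.range K, F k := fun a b hab =>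
    Finset.prod_le_prod_of_subset_of_one_le' (Finset.range_subset_range.2 hab)
      fun i _ _ => h1' i
  have hmono : Monotone fun K => ∏ k ∈ Finset.range K, f k := fun a b hab => by
    show ∏ k ∈ Finset.range a, f k ≤ ∏ k ∈ Finset.range b, f k
    rw [← hcoe, ← hcoe]; exact_mod_cast hmonoF hab
  have hlub : IsLUB (Set.range fun s : Finset ℕ => ∏ k ∈ s, F k) L' := by
    constructor
    · rintro x ⟨s, rfl⟩
      obtain ⟨m, hm⟩ := s.exists_nat_subset_range
      calc ∏ k ∈ s, F k ≤ ∏ k ∈ Finset.range m, F k :=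
            Finset.prod_le_prod_of_subset_of_one_le' hm fun i _ _ => h1' i
        _ ≤ L' := by
            rw [← NNReal.coe_le_coe, hcoe]
            exact hmono.ge_of_tendsto hL m
    · intro c hc
      rw [← NNReal.coe_le_coe]
      refine le_of_tendsto hL (Eventually.of_forall fun K => ?_)
      rw [← hcoe]
      exact NNReal.coe_le_coe.2 (hc ⟨Finset.range K, rfl⟩)
  have h := hasProd_of_isLUB_of_one_le L' h1' hlub
  have h2 := h.map (NNReal.toRealHom.toMonoidHom) NNReal.continuous_coe
  exact h2

lemma abs_ratio_lt_one : |goldenConj / goldenRatio| < 1 := by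
  rw [abs_div, abs_of_pos goldenRatio_pos, div_lt_one goldenRatio_pos]
  calc |goldenConj| = -goldenConj := abs_of_neg goldenConj_neg
    _ < 1 := by have := neg_one_lt_goldenConj; linarith
    _ < goldenRatio := one_lt_goldenRatio

lemma lucas_div_fib_tendsto (n : ℕ) (hn : 0 < n) :
    Tendsto (fun m : ℕ => (lucas (2 * n * m) : ℝ) / Nat.fib (2 * n * m)) atTop (𝓝 (√5)) := by
  set r : ℝ := goldenConj / goldenRatio with hr
  have hrabs := abs_ratio_lt_one
  have ht0 : Tendsto (fun m : ℕ => r ^ (2 * n * m)) atTop (𝓝 0) := by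
    have : Tendsto (fun m : ℕ => (r ^ (2 * n)) ^ m) atTop (𝓝 0) := by
      apply tendsto_pow_atTop_nhds_zero_of_abs_lt_one
      rw [abs_pow]
      exact pow_lt_one₀ (abs_nonneg _) hrabs (by omega)
    simpa [pow_mul] using this
  have key : ∀ m : ℕ, 1 ≤ m →
      (lucas (2 * n * m) : ℝ) / Nat.fib (2 * n * m)
        = √5 * ((1 + r ^ (2 * n * m)) / (1 - r ^ (2 * n * m))) := by
    intro m hm
    set M := 2 * n * m with hM
    have hφ : (0:ℝ) < goldenRatio ^ M := pow_pos goldenRatio_pos M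
    have hrM : |r ^ M| < 1 := by
      rw [abs_pow]
      exact pow_lt_one₀ (abs_nonneg _) hrabs (by positivity)
    have hne : (1:ℝ) - r ^ M ≠ 0 := by
      intro h
      have : r ^ M = 1 := by linarith
      rw [this] at hrM; simp at hrM
    have h5 : √5 ≠ 0 := by positivity
    have hψ : goldenConj ^ M = goldenRatio ^ M * r ^ M := by
      rw [hr, ← mul_pow, mul_div_assoc', mul_div_cancel_left₀ _ goldenRatio_ne_zero]
    have hne2 : goldenRatio ^ M - goldenRatio ^ M * r ^ M ≠ 0 := by
      have hrw : goldenRatio ^ M - goldenRatio ^ M * r ^ M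
          = goldenRatio ^ M * (1 - r ^ M) := by ring
      rw [hrw]
      exact mul_ne_zero hφ.ne' hne
    have e1 : goldenRatio ^ M + goldenRatio ^ M * r ^ M
        = goldenRatio ^ M * (1 + r ^ M) := by ring
    have e2 : goldenRatio ^ M - goldenRatio ^ M * r ^ M
        = goldenRatio ^ M * (1 - r ^ M) := by ring
    rw [lucas_real, Real.coe_fib_eq, hψ, div_div_eq_mul_div, e1, e2, mul_assoc,
      mul_div_mul_left _ _ hφ.ne', mul_comm (1 + r ^ M) (√5), mul_div_assoc]
  have h' : Tendsto (fun m : ℕ => √5 * ((1 + r ^ (2*n*m)) / (1 - r ^ (2*n*m)))) atTop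
      (𝓝 (√5 * ((1 + 0) / (1 - 0)))) :=
    Tendsto.const_mul _ (Tendsto.div (tendsto_const_nhds.add ht0)
      (tendsto_const_nhds.sub ht0) (by norm_num))
  norm_num at h'
  exact Tendsto.congr' (by filter_upwards [eventually_ge_atTop 1] with m hm using (key m hm).symm) h'

theorem stmt_14 (q n : ℕ) (hq : 0 < q) (hn : 0 < n) :
    ∏' k : ℕ,
        ((Nat.fib (4 * n * ((k + 1) + q)) : ℝ) + (Nat.fib (4 * n * q) : ℝ)) /
          ((Nat.fib (4 * n * ((k + 1) + q)) : ℝ) - (Nat.fib (4 * n * q) : ℝ)) =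
      (1 / (5 : ℝ) ^ q) *
        ∏ k ∈ Finset.Icc 1 (2 * q), (lucas (2 * n * k) : ℝ) / (Nat.fib (2 * n * k) : ℝ) := by
  set g : ℕ → ℝ := fun m => (lucas (2 * n * m) : ℝ) / (Nat.fib (2 * n * m) : ℝ) with hg
  have hgpos : ∀ m, 1 ≤ m → 0 < g m := by
    intro m hm
    apply div_pos
    · exact_mod_cast lucas_pos _
    · exact_mod_cast Nat.fib_pos.2 (Nat.mul_pos (by omega) hm)
  set f : ℕ → ℝ := fun k =>
    ((Nat.fib (4 * n * ((k + 1) + q)) : ℝ) + (Nat.fib (4 * n * q) : ℝ)) /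
      ((Nat.fib (4 * n * ((k + 1) + q)) : ℝ) - (Nat.fib (4 * n * q) : ℝ)) with hf
  have heven : ∀ k : ℕ, Even (2 * n * (k + 1)) := fun k => ⟨n * (k + 1), by ring⟩
  have hAB : ∀ k : ℕ,
      ((Nat.fib (4 * n * ((k + 1) + q)) : ℝ) + Nat.fib (4 * n * q)
        = Nat.fib (2 * n * (k + 1 + 2 * q)) * lucas (2 * n * (k + 1))) ∧
      ((Nat.fib (4 * n * ((k + 1) + q)) : ℝ) - Nat.fib (4 * n * q)
        = lucas (2 * n * (k + 1 + 2 * q)) * Nat.fib (2 * n * (k + 1))) := by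
    intro k
    have hA := fib_add_eq (a := 4 * n * q) (e := 2 * n * (k + 1)) (heven k)
    have hB := fib_sub_eq (a := 4 * n * q) (e := 2 * n * (k + 1)) (heven k)
    have hidx : 4 * n * q + 2 * (2 * n * (k + 1)) = 4 * n * ((k + 1) + q) := by ring
    have hidx2 : 4 * n * q + 2 * n * (k + 1) = 2 * n * (k + 1 + 2 * q) := by ring
    rw [hidx, hidx2] at hA hB
    exact ⟨hA, hB⟩
  have hfibpos : ∀ m : ℕ, 1 ≤ m → (0:ℝ) < Nat.fib (2 * n * m) := by
    intro m hm
    exact_mod_cast Nat.fib_pos.2 (Nat.mul_pos (by omega) hm)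
  have hlucpos : ∀ m : ℕ, (0:ℝ) < lucas m := fun m => by exact_mod_cast lucas_pos m
  have hfk : ∀ k : ℕ, f k = g (k + 1) / g (k + 1 + 2 * q) := by
    intro k
    obtain ⟨hA, hB⟩ := hAB k
    show (((Nat.fib (4 * n * ((k + 1) + q)) : ℝ) + Nat.fib (4 * n * q)) /
      ((Nat.fib (4 * n * ((k + 1) + q)) : ℝ) - Nat.fib (4 * n * q))) = _
    rw [hA, hB]
    show _ = ((lucas (2 * n * (k+1)) : ℝ) / (Nat.fib (2 * n * (k+1)) : ℝ)) /
      ((lucas (2 * n * (k + 1 + 2 * q)) : ℝ) / (Nat.fib (2 * n * (k + 1 + 2 * q)) : ℝ))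
    have h1 := (hfibpos (k+1) (by omega)).ne'
    have h2 := (hfibpos (k+1+2*q) (by omega)).ne'
    have h3 := (hlucpos (2 * n * (k+1+2*q))).ne'
    field_simp
  have hone : ∀ k : ℕ, 1 ≤ f k := by
    intro k
    obtain ⟨hA, hB⟩ := hAB k
    show 1 ≤ (((Nat.fib (4 * n * ((k + 1) + q)) : ℝ) + Nat.fib (4 * n * q)) /
      ((Nat.fib (4 * n * ((k + 1) + q)) : ℝ) - Nat.fib (4 * n * q)))
    have hpos : (0:ℝ) < (Nat.fib (4 * n * ((k + 1) + q)) : ℝ) - Nat.fib (4 * n * q) := by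
      rw [hB]; exact mul_pos (hlucpos _) (hfibpos (k+1) (by omega))
    rw [one_le_div hpos]
    have : (0:ℝ) ≤ (Nat.fib (4 * n * q) : ℝ) := Nat.cast_nonneg _
    linarith
  have htel : ∀ K : ℕ,
      (∏ k ∈ Finset.range K, f k) * ∏ j ∈ Finset.range (2 * q), g (K + 1 + j)
        = ∏ j ∈ Finset.range (2 * q), g (1 + j) := by
    intro K
    induction K with
    | zero => simp
    | succ K ih =>
      have hstar : ∏ j ∈ Finset.range (2 * q + 1), g (K + 1 + j)
          = (∏ j ∈ Finset.range (2 * q), g (K + 1 + j)) * g (K + 1 + 2 * q) :=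
        Finset.prod_range_succ _ _
      have hstar' : ∏ j ∈ Finset.range (2 * q + 1), g (K + 1 + j)
          = (∏ j ∈ Finset.range (2 * q), g (K + 1 + 1 + j)) * g (K + 1) := by
        rw [Finset.prod_range_succ']
        congr 1
        apply Finset.prod_congr rfl
        intro j _
        congr 1
        omega
      have heq := hstar'.symm.trans hstar
      rw [Finset.prod_range_succ, hfk K]
      calc ((∏ k ∈ Finset.range K, f k) * (g (K + 1) / g (K + 1 + 2 * q))) *
            ∏ j ∈ Finset.range (2 * q), g (K + 1 + 1 + j)
          = (∏ k ∈ Finset.range K, f k) *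
            (((∏ j ∈ Finset.range (2 * q), g (K + 1 + 1 + j)) * g (K + 1)) / g (K + 1 + 2 * q)) := by
            ring
        _ = (∏ k ∈ Finset.range K, f k) *
            (((∏ j ∈ Finset.range (2 * q), g (K + 1 + j)) * g (K + 1 + 2 * q)) / g (K + 1 + 2 * q)) := by
            rw [heq]
        _ = (∏ k ∈ Finset.range K, f k) * ∏ j ∈ Finset.range (2 * q), g (K + 1 + j) := by
            rw [mul_div_cancel_right₀ _ (hgpos _ (by omega)).ne']
        _ = _ := ih
  have hglim := lucas_div_fib_tendsto n hn
  have hDlim : Tendsto (fun K : ℕ => ∏ j ∈ Finset.range (2 * q), g (K + 1 + j)) atTop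
      (𝓝 ((5:ℝ) ^ q)) := by
    have h1 : Tendsto (fun K : ℕ => ∏ j ∈ Finset.range (2 * q), g (K + 1 + j)) atTop
        (𝓝 (∏ _j ∈ Finset.range (2 * q), √5)) := by
      apply tendsto_finset_prod
      intro j _
      have hcomp := hglim.comp (tendsto_add_atTop_nat (1 + j))
      apply hcomp.congr
      intro K
      show g (K + (1 + j)) = g (K + 1 + j)
      congr 1
      omega
    have : (∏ _j ∈ Finset.range (2 * q), √5) = (5:ℝ) ^ q := by
      rw [Finset.prod_const, Finset.card_range, pow_mul,
        Real.sq_sqrt (by norm_num : (0:ℝ) ≤ 5)]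
    rwa [this] at h1
  have hD : ∀ K : ℕ, (∏ j ∈ Finset.range (2 * q), g (K + 1 + j)) ≠ 0 := fun K =>
    (Finset.prod_pos fun j _ => hgpos _ (by omega)).ne'
  have hPlim : Tendsto (fun K : ℕ => ∏ k ∈ Finset.range K, f k) atTop
      (𝓝 ((∏ j ∈ Finset.range (2 * q), g (1 + j)) / (5:ℝ) ^ q)) := by
    have h := Tendsto.div
      (tendsto_const_nhds (x := (∏ j ∈ Finset.range (2 * q), g (1 + j))) (f := atTop))
      hDlim (by positivity : ((5:ℝ) ^ q) ≠ 0)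
    exact Tendsto.congr (fun K => ((eq_div_iff (hD K)).mpr (htel K)).symm) h
  have hprod := hasProd_of_one_le_of_tendsto hone hPlim
  rw [hprod.tprod_eq]
  have hIcc : ∏ k ∈ Finset.Icc 1 (2 * q), g k = ∏ j ∈ Finset.range (2 * q), g (1 + j) := by
    rw [← Finset.Ico_add_one_right_eq_Icc, Finset.prod_Ico_eq_prod_range]
    simp
  rw [hIcc]
  ring
end

section
/- The infinite product ∏_{k=1}^{∞} (L_{2k+1} + √5)/(L_{2k+1} - √5) converges and equals φ⁴, where φ = (1+√5)/2. -/
noncomputable def phi : ℝ := (1 + Real.sqrt 5) / 2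

lemma sqrt5_pos : 0 < Real.sqrt 5 := Real.sqrt_pos.mpr (by norm_num)

lemma sqrt5_lt_three : Real.sqrt 5 < 3 := by
  nlinarith [Real.sq_sqrt (by norm_num : (5:ℝ) ≥ 0), Real.sqrt_nonneg 5]

lemma one_lt_phi : 1 < phi := by
  unfold phi
  nlinarith [Real.sq_sqrt (by norm_num : (5:ℝ) ≥ 0), sqrt5_pos]

lemma hp : phi ^ 2 = phi + 1 := by
  unfold phi
  nlinarith [Real.sq_sqrt (by norm_num : (5:ℝ) ≥ 0)]

lemma hs : Real.sqrt 5 = 2 * phi - 1 := by unfold phi; ring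

lemma lucas_phi : ∀ n : ℕ, (lucas n : ℝ) * phi ^ n = phi ^ (2 * n) + (-1) ^ n := by
  have key : ∀ n : ℕ, ((lucas n : ℝ) * phi ^ n = phi ^ (2 * n) + (-1) ^ n) ∧
      ((lucas (n+1) : ℝ) * phi ^ (n+1) = phi ^ (2 * (n+1)) + (-1) ^ (n+1)) := by
    intro n
    induction n with
    | zero =>
      constructor
      · norm_num [lucas]
      · show (lucas 1 : ℝ) * phi ^ 1 = _
        norm_num [lucas]
        linear_combination -hp
    | succ n ih =>
      obtain ⟨e1, e2⟩ := ih
      refine ⟨e2, ?_⟩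
      have h2 : lucas (n+2) = lucas n + lucas (n+1) := rfl
      rw [h2]
      push_cast
      linear_combination phi^2 * e1 + phi * e2 + ((-1:ℝ)^n - phi^(2*n+2)) * hp
  exact fun n => (key n).1

lemma one_le_lucas : ∀ n : ℕ, 1 ≤ lucas n := by
  have key : ∀ n : ℕ, 1 ≤ lucas n ∧ 1 ≤ lucas (n+1) := by
    intro n
    induction n with
    | zero => exact ⟨by norm_num [lucas], le_refl _⟩
    | succ n ih =>
      obtain ⟨i1, i2⟩ := ih
      have h2 : lucas (n+2) = lucas n + lucas (n+1) := rfl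
      exact ⟨i2, by rw [h2]; omega⟩
  exact fun n => (key n).1

lemma four_le_lucas_odd : ∀ k : ℕ, 4 ≤ lucas (2*k+3) := by
  intro k
  induction k with
  | zero => norm_num [lucas]
  | succ k ih =>
    have h2 : lucas (2*k+3+2) = lucas (2*k+3) + lucas (2*k+4) := rfl
    have := one_le_lucas (2*k+4)
    have e : 2*(k+1)+3 = 2*k+3+2 := by omega
    rw [e, h2]; omega

noncomputable def gg (k : ℕ) : ℝ :=
  ((phi^(2*k+1)+1)/(phi^(2*k+1)-1)) * ((phi^(2*k+3)+1)/(phi^(2*k+3)-1))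

lemma one_lt_phi_pow {m : ℕ} (hm : m ≠ 0) : 1 < phi ^ m := one_lt_pow₀ one_lt_phi hm

lemma one_lt_gg (k : ℕ) : 1 < gg k := by
  have h1 : 1 < phi^(2*k+1) := one_lt_phi_pow (by omega)
  have h2 : 1 < phi^(2*k+3) := one_lt_phi_pow (by omega)
  have f1 : 1 < (phi^(2*k+1)+1)/(phi^(2*k+1)-1) := (one_lt_div (by linarith)).mpr (by linarith)
  have f2 : 1 < (phi^(2*k+3)+1)/(phi^(2*k+3)-1) := (one_lt_div (by linarith)).mpr (by linarith)
  unfold gg; nlinarith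

lemma gg_pos (k : ℕ) : 0 < gg k := lt_trans one_pos (one_lt_gg k)

lemma gg_ne (k : ℕ) : gg k ≠ 0 := ne_of_gt (gg_pos k)

lemma gg_zero : gg 0 = phi ^ 4 := by
  have h1 : 1 < phi^(2*0+1) := one_lt_phi_pow (by omega)
  have h3 : 1 < phi^(2*0+3) := one_lt_phi_pow (by omega)
  norm_num at h1 h3
  unfold gg
  norm_num
  rw [div_mul_div_comm, div_eq_iff (by nlinarith)]
  linear_combination (-(1:ℝ) - phi^2 - phi^4 - phi^6) * hp

lemma term_eq (k : ℕ) :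
    ((lucas (2 * (k + 1) + 1) : ℝ) + Real.sqrt 5) / ((lucas (2 * (k + 1) + 1) : ℝ) - Real.sqrt 5)
    = gg k / gg (k+1) := by
  set s := Real.sqrt 5 with hsdef
  set a := phi^(2*k+1) with hadef
  have ha : 1 < a := one_lt_phi_pow (by omega)
  have hb : phi^(2*k+3) = a * phi^2 := by rw [hadef, ← pow_add]
  have hc : phi^(2*k+5) = a * phi^4 := by rw [hadef, ← pow_add]
  have hb1 : 1 < a * phi^2 := by rw [← hb]; exact one_lt_phi_pow (by omega)
  have hc1 : 1 < a * phi^4 := by rw [← hc]; exact one_lt_phi_pow (by omega)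
  set L : ℝ := (lucas (2 * (k + 1) + 1) : ℝ) with hLdef
  have hL : L * (a * phi^2) = (a * phi^2)^2 - 1 := by
    have h := lucas_phi (2*k+3)
    have hodd : (-1 : ℝ)^(2*k+3) = -1 := Odd.neg_one_pow ⟨k+1, by ring⟩
    have hsq : phi^(2*(2*k+3)) = (phi^(2*k+3))^2 := by
      rw [← pow_mul]; ring_nf
    rw [hodd, hsq, hb] at h
    have he : (2 : ℕ) * (k+1) + 1 = 2*k+3 := by omega
    rw [hLdef, he, h]; ring
  have hL4 : (4:ℝ) ≤ L := by
    have := four_le_lucas_odd k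
    have he : (2 : ℕ) * (k+1) + 1 = 2*k+3 := by omega
    rw [hLdef, he]; exact_mod_cast this
  have hslt : s < 3 := sqrt5_lt_three
  have hspos : 0 < s := sqrt5_pos
  have hLs : 0 < L - s := by linarith
  -- numerator/denominator factorizations
  have hsphi : s = 2 * phi - 1 := hs
  have hA : L + s = ((a+1) * (a*phi^4 - 1)) / (a * phi^2) := by
    rw [eq_div_iff (by positivity)]
    linear_combination hL + (a * phi^2) * hsphi + (-a*(phi^2 - phi + 1)) * hp
  have hB : L - s = ((a-1) * (a*phi^4 + 1)) / (a * phi^2) := by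
    rw [eq_div_iff (by positivity)]
    linear_combination hL - (a * phi^2) * hsphi + (a*(phi^2 - phi + 1)) * hp
  have hgg1 : gg k = ((a+1)/(a-1)) * ((a*phi^2+1)/(a*phi^2-1)) := by
    unfold gg; rw [← hadef, hb]
  have hgg2 : gg (k+1) = ((a*phi^2+1)/(a*phi^2-1)) * ((a*phi^4+1)/(a*phi^4-1)) := by
    unfold gg
    have e1 : 2*(k+1)+1 = 2*k+3 := by omega
    have e2 : 2*(k+1)+3 = 2*k+5 := by omega
    rw [e1, e2, hb, hc]
  rw [hA, hB, hgg1, hgg2]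
  have h1 : a - 1 > 0 := by linarith
  have h2 : a*phi^2 - 1 > 0 := by linarith
  have h3 : a*phi^4 - 1 > 0 := by linarith
  have h4 : a*phi^4 + 1 > 0 := by linarith
  have h5 : a*phi^2 + 1 > 0 := by linarith
  have hphi : (0:ℝ) < phi := by have := one_lt_phi; linarith
  field_simp

lemma hfrac : Filter.Tendsto (fun x : ℝ => (x+1)/(x-1)) Filter.atTop (nhds 1) := by
  have h1 : Filter.Tendsto (fun x : ℝ => x - 1) Filter.atTop Filter.atTop :=
    Filter.tendsto_atTop_add_const_right _ (-1) Filter.tendsto_id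
  have h2 : Filter.Tendsto (fun x : ℝ => 2 / (x - 1)) Filter.atTop (nhds 0) :=
    Filter.Tendsto.div_atTop tendsto_const_nhds h1
  have h3 : Filter.Tendsto (fun x : ℝ => 1 + 2 / (x - 1)) Filter.atTop (nhds 1) := by
    have := tendsto_const_nhds (α := ℝ) (x := (1:ℝ)) (f := Filter.atTop) |>.add h2
    simpa using this
  refine h3.congr' ?_
  filter_upwards [Filter.eventually_gt_atTop (1:ℝ)] with x hx
  have : x - 1 ≠ 0 := by linarith
  field_simp
  ring

lemma gg_tendsto : Filter.Tendsto gg Filter.atTop (nhds 1) := by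
  have hpow : Filter.Tendsto (fun m : ℕ => phi ^ m) Filter.atTop Filter.atTop :=
    tendsto_pow_atTop_atTop_of_one_lt one_lt_phi
  have hm1 : Filter.Tendsto (fun k : ℕ => 2*k+1) Filter.atTop Filter.atTop :=
    Filter.tendsto_atTop_mono (fun k => by omega : ∀ k : ℕ, k ≤ 2*k+1) Filter.tendsto_id
  have hm2 : Filter.Tendsto (fun k : ℕ => 2*k+3) Filter.atTop Filter.atTop :=
    Filter.tendsto_atTop_mono (fun k => by omega : ∀ k : ℕ, k ≤ 2*k+3) Filter.tendsto_id
  have h1 : Filter.Tendsto (fun k : ℕ => phi^(2*k+1)) Filter.atTop Filter.atTop := hpow.comp hm1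
  have h2 : Filter.Tendsto (fun k : ℕ => phi^(2*k+3)) Filter.atTop Filter.atTop := hpow.comp hm2
  have := (hfrac.comp h1).mul (hfrac.comp h2)
  rw [mul_one] at this
  exact this

theorem stmt_16 :
    HasProd (fun k : ℕ =>
      ((lucas (2 * (k + 1) + 1) : ℝ) + Real.sqrt 5) / ((lucas (2 * (k + 1) + 1) : ℝ) - Real.sqrt 5))
      (phi ^ 4) := by
  have phipos : (0:ℝ) < phi := lt_trans one_pos one_lt_phi
  set F : ℕ → ℝ := fun k =>
    ((lucas (2 * (k + 1) + 1) : ℝ) + Real.sqrt 5) / ((lucas (2 * (k + 1) + 1) : ℝ) - Real.sqrt 5)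
    with hF
  have hF1 : ∀ k, 1 ≤ F k := by
    intro k
    have h4 : (4:ℝ) ≤ (lucas (2*(k+1)+1) : ℝ) := by
      have := four_le_lucas_odd k
      have he : (2 : ℕ) * (k+1) + 1 = 2*k+3 := by omega
      rw [he]; exact_mod_cast this
    have hs3 := sqrt5_lt_three
    have hs0 := sqrt5_pos
    rw [hF]
    exact (one_le_div (by linarith)).mpr (by linarith)
  have hFpos : ∀ k, 0 < F k := fun k => lt_of_lt_of_le one_pos (hF1 k)
  have hprodr : ∀ n, ∏ k ∈ Finset.range n, F k = gg 0 / gg n := by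
    intro n
    induction n with
    | zero => simp [div_self (gg_ne 0)]
    | succ n ih =>
      rw [Finset.prod_range_succ, ih]
      have ht : F n = gg n / gg (n+1) := term_eq n
      rw [ht, div_mul_div_comm,
        div_eq_div_iff (mul_ne_zero (gg_ne n) (gg_ne (n+1))) (gg_ne (n+1))]
      ring
  have hlog : HasSum (fun k => Real.log (F k)) (Real.log (phi^4)) := by
    rw [hasSum_iff_tendsto_nat_of_nonneg (fun k => Real.log_nonneg (hF1 k))]
    have hsum : ∀ n, ∑ k ∈ Finset.range n, Real.log (F k) = Real.log (gg 0) - Real.log (gg n) := by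
      intro n
      rw [← Real.log_prod (fun k _ => ne_of_gt (hFpos k)), hprodr n,
        Real.log_div (gg_ne 0) (gg_ne n)]
    have hloggg : Filter.Tendsto (fun n => Real.log (gg n)) Filter.atTop (nhds 0) := by
      have hcont : Filter.Tendsto Real.log (nhds 1) (nhds 0) := by
        have := (Real.continuousAt_log one_ne_zero).tendsto
        simpa using this
      exact hcont.comp gg_tendsto
    have := (tendsto_const_nhds (x := Real.log (gg 0))).sub hloggg
    rw [sub_zero] at this
    refine Filter.Tendsto.congr (fun n => (hsum n).symm) ?_
    rwa [← gg_zero]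
  have hprod := hlog.rexp
  have hfe : Real.exp ∘ (fun k => Real.log (F k)) = F :=
    funext fun k => Real.exp_log (hFpos k)
  rw [hfe, Real.exp_log (by positivity : (0:ℝ) < phi^4)] at hprod
  exact hprod
end

section
/- For all positive integers q, n, ∏_{k=1}^{∞} (F_{(2n-1)(2q+2k)} + (-1)^{k-1} F_{(2n-1)·2q})/(F_{(2n-1)(2q+2k)} + (-1)^k F_{(2n-1)·2q}) = 5^q · ∏_{k=1}^{q} (F_{(2n-1)(2k-1)} · F_{(2n-1)·2k})/(L_{(2n-1)(2k-1)} · L_{(2n-1)·2k}). -/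
open Real Filter Finset Topology goldenRatio

lemma lucas_binet : ∀ i : ℕ, (lucas i : ℝ) = φ ^ i + ψ ^ i
  | 0 => by norm_num [lucas]
  | 1 => by norm_num [lucas]
  | (n+2) => by
      rw [lucas, Nat.cast_add, lucas_binet n, lucas_binet (n+1)]
      have h1 : φ ^ (n+2) = φ ^ n * φ ^ 2 := by ring
      have h2 : ψ ^ (n+2) = ψ ^ n * ψ ^ 2 := by ring
      rw [h1, h2, goldenRatio_sq, goldenConj_sq]; ring

noncomputable def eps (a : ℝ) (i : ℕ) : ℝ := (-1)^i * ((a^2)⁻¹)^i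

noncomputable def uu (a : ℝ) (i : ℕ) : ℝ := Real.log (1 + eps a i) - Real.log (1 - eps a i)

lemma r_lt_one {a : ℝ} (ha : 1 < a) : (a^2)⁻¹ < 1 := by
  rw [inv_lt_one_iff₀]; right; nlinarith

lemma r_pos {a : ℝ} (ha : 1 < a) : 0 < (a^2)⁻¹ := by positivity

lemma abs_eps {a : ℝ} (i : ℕ) : |eps a i| = ((a^2)⁻¹)^i := by
  rw [eps, abs_mul, abs_pow, abs_neg, abs_one, one_pow, one_mul, abs_pow]
  congr 1
  exact abs_of_nonneg (by positivity)

lemma log_abs_le {x c : ℝ} (hx : |x| ≤ c) (hc : c < 1) : |Real.log (1 + x)| ≤ |x| / (1 - c) := by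
  have hx1 : -c ≤ x := neg_le_of_abs_le hx
  have hx2 : x ≤ c := le_of_abs_le hx
  have hpos : 0 < 1 + x := by linarith
  have h1c : 0 < 1 - c := by linarith
  rcases le_or_gt 0 x with h | h
  · rw [abs_of_nonneg (Real.log_nonneg (by linarith))]
    calc Real.log (1 + x) ≤ (1 + x) - 1 := Real.log_le_sub_one_of_pos hpos
    _ = x := by ring
    _ = |x| := (abs_of_nonneg h).symm
    _ ≤ |x| / (1 - c) := by
        rw [le_div_iff₀ h1c]; nlinarith [abs_nonneg x]
  · have hneg : Real.log (1 + x) ≤ 0 := Real.log_nonpos (by linarith) (by linarith)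
    rw [abs_of_nonpos hneg, ← Real.log_inv]
    have hinvpos : 0 < (1 + x)⁻¹ := by positivity
    calc Real.log (1 + x)⁻¹ ≤ (1 + x)⁻¹ - 1 := Real.log_le_sub_one_of_pos hinvpos
    _ = (-x) / (1 + x) := by field_simp; ring
    _ ≤ (-x) / (1 - c) := by
        apply div_le_div_of_nonneg_left (by linarith) h1c (by linarith)
    _ = |x| / (1 - c) := by rw [abs_of_neg h]

lemma uu_abs_le {a : ℝ} (ha : 1 < a) (i : ℕ) :
    |uu a (i + 1)| ≤ 2 / (1 - (a^2)⁻¹) * ((a^2)⁻¹) ^ (i + 1) := by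
  have hr1 := r_lt_one ha
  have hr0 := r_pos ha
  have habs : |eps a (i+1)| ≤ (a^2)⁻¹ := by
    rw [abs_eps]
    calc ((a^2)⁻¹)^(i+1) ≤ ((a^2)⁻¹)^1 := pow_le_pow_of_le_one (le_of_lt hr0) (le_of_lt hr1) (by omega)
    _ = (a^2)⁻¹ := pow_one _
  have h1 := log_abs_le habs hr1
  have habs' : |-eps a (i+1)| ≤ (a^2)⁻¹ := by rwa [abs_neg]
  have h2 := log_abs_le habs' hr1
  rw [uu]
  have : 1 + -eps a (i+1) = 1 - eps a (i+1) := by ring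
  rw [this] at h2
  rw [abs_neg] at h2
  have := abs_sub (Real.log (1 + eps a (i+1))) (Real.log (1 - eps a (i+1)))
  have hee : |eps a (i+1)| = ((a^2)⁻¹)^(i+1) := abs_eps _
  calc |Real.log (1 + eps a (i+1)) - Real.log (1 - eps a (i+1))|
      ≤ |Real.log (1 + eps a (i+1))| + |Real.log (1 - eps a (i+1))| := abs_sub _ _
    _ ≤ |eps a (i+1)| / (1 - (a^2)⁻¹) + |eps a (i+1)| / (1 - (a^2)⁻¹) := add_le_add h1 h2
    _ = 2 / (1 - (a^2)⁻¹) * ((a^2)⁻¹)^(i+1) := by rw [hee]; ring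

lemma summable_uu {a : ℝ} (ha : 1 < a) : Summable fun i : ℕ => ‖uu a (i + 1)‖ := by
  have hr1 := r_lt_one ha
  have hr0 := r_pos ha
  apply Summable.of_nonneg_of_le (fun i => norm_nonneg _)
    (fun i => by simpa [Real.norm_eq_abs] using uu_abs_le ha i)
  have : Summable fun i : ℕ => ((a^2)⁻¹) ^ i :=
    summable_geometric_of_lt_one (le_of_lt hr0) hr1
  exact (this.mul_left (2 / (1 - (a^2)⁻¹) * (a^2)⁻¹)).congr
    (fun i => by rw [pow_succ]; ring)

lemma key {a : ℝ} (ha : 1 < a) (q : ℕ) :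
    HasProd (fun k : ℕ => Real.exp (uu a (2 * q + k + 1) - uu a (k + 1)))
      (Real.exp (-(∑ k ∈ Finset.range (2 * q), uu a (k + 1)))) := by
  set v : ℕ → ℝ := fun k => uu a (k + 1) with hv
  have hsv : Summable fun k => ‖v k‖ := summable_uu ha
  have hsv' : Summable fun k => ‖v (2 * q + k)‖ := by
    have := (summable_nat_add_iff (f := fun k => ‖v k‖) (2 * q)).2 hsv
    exact this.congr (fun k => by rw [add_comm])
  set d : ℕ → ℝ := fun k => v (2 * q + k) - v k with hd
  have hsd : Summable fun k => ‖d k‖ := by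
    apply Summable.of_nonneg_of_le (fun i => norm_nonneg _)
      (fun i => norm_sub_le _ _) (hsv'.add hsv)
  have hT : HasSum v (∑' k, v k) := hsv.of_norm.hasSum
  have hpartial : ∀ N : ℕ, ∑ k ∈ Finset.range N, d k =
      ∑ k ∈ Finset.range (2 * q + N), v k - ∑ k ∈ Finset.range (2 * q), v k
        - ∑ k ∈ Finset.range N, v k := by
    intro N
    rw [Finset.sum_range_add]
    simp [hd, Finset.sum_sub_distrib]
  have htend : Tendsto (fun N => ∑ k ∈ Finset.range N, d k) atTop
      (𝓝 (-(∑ k ∈ Finset.range (2 * q), v k))) := by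
    have h1 : Tendsto (fun N => ∑ k ∈ Finset.range (2 * q + N), v k) atTop
        (𝓝 (∑' k, v k)) := by
      have := hT.tendsto_sum_nat.comp (tendsto_add_atTop_nat (2 * q))
      exact this.congr (fun N => by simp [add_comm])
    have h2 := (h1.sub_const (∑ k ∈ Finset.range (2 * q), v k)).sub hT.tendsto_sum_nat
    have h3 : (∑' k, v k) - ∑ k ∈ Finset.range (2 * q), v k - (∑' k, v k)
        = -(∑ k ∈ Finset.range (2 * q), v k) := by ring
    rw [h3] at h2
    exact h2.congr (fun N => (hpartial N).symm)
  have hsum : HasSum d (-(∑ k ∈ Finset.range (2 * q), v k)) :=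
    (hasSum_iff_tendsto_nat_of_summable_norm hsd).2 htend
  have := hsum.rexp
  exact this.congr_fun (fun k => rfl)

lemma per (x y s : ℝ) (hx : 1 < x) (hy : 1 < y) (hs : s = 1 ∨ s = -1) :
    (x * y * (1 - ((x * y) ^ 2)⁻¹) + s * (y * (1 - (y ^ 2)⁻¹))) /
        (x * y * (1 - ((x * y) ^ 2)⁻¹) - s * (y * (1 - (y ^ 2)⁻¹))) =
      (1 + -s / (x * y ^ 2)) / (1 - -s / (x * y ^ 2)) *
        ((1 - -s / x) / (1 + -s / x)) := by
  have hx0 : (0:ℝ) < x := by linarith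
  have hy0 : (0:ℝ) < y := by linarith
  have hxy : 1 < x * y := by nlinarith
  have hxy2 : (1:ℝ) < x * y ^ 2 := by nlinarith
  have hxy0 : (0:ℝ) < x * y := by positivity
  have e1 : x * y * (1 - ((x * y) ^ 2)⁻¹) = x * y - (x * y)⁻¹ := by
    field_simp
  have e2 : y * (1 - (y ^ 2)⁻¹) = y - y⁻¹ := by field_simp
  have hyinv : y⁻¹ < 1 := by rw [inv_lt_one_iff₀]; right; exact hy
  have hy1 : 0 < y - y⁻¹ := by linarith
  have hmono : y - y⁻¹ < x * y - (x * y)⁻¹ := by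
    have h1 : y < x * y := by nlinarith
    have h2 : (x * y)⁻¹ < y⁻¹ := by exact inv_strictAnti₀ hy0 h1
    linarith
  have hxinv : x⁻¹ < 1 := by rw [inv_lt_one_iff₀]; right; exact hx
  have hxy2inv : (x * y ^ 2)⁻¹ < 1 := by rw [inv_lt_one_iff₀]; right; exact hxy2
  have hxy2inv0 : 0 < (x * y ^ 2)⁻¹ := by positivity
  have hxinv0 : 0 < x⁻¹ := by positivity
  rw [e1, e2]
  rcases hs with h | h <;> subst h
  · have hd1 : x * y - (x * y)⁻¹ - 1 * (y - y⁻¹) ≠ 0 := by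
      have : 0 < x * y - (x * y)⁻¹ - 1 * (y - y⁻¹) := by linarith
      linarith
    have hd2 : 1 - -1 / (x * y ^ 2) ≠ 0 := by
      have : (0:ℝ) < 1 + (x * y ^ 2)⁻¹ := by linarith
      rw [neg_div]
      intro hcon
      rw [div_eq_inv_mul, mul_one] at hcon
      linarith
    have hd3 : 1 + -1 / x ≠ 0 := by
      rw [neg_div]
      intro hcon
      rw [div_eq_inv_mul, mul_one] at hcon
      linarith
    rw [div_mul_div_comm, div_eq_div_iff hd1 (mul_ne_zero ?h1 ?h2)]
    case h1 =>
      have : (0:ℝ) < 1 + (x * y ^ 2)⁻¹ := by linarith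
      rw [neg_div, sub_neg_eq_add]
      intro hcon; rw [div_eq_inv_mul, mul_one] at hcon; linarith
    case h2 =>
      have : (0:ℝ) < 1 - x⁻¹ := by linarith
      rw [neg_div]
      intro hcon; rw [div_eq_inv_mul, mul_one] at hcon; linarith
    field_simp
    ring
  · have hd1 : x * y - (x * y)⁻¹ - (-1) * (y - y⁻¹) ≠ 0 := by
      have : 0 < x * y - (x * y)⁻¹ + (y - y⁻¹) := by linarith
      intro hcon; rw [neg_one_mul] at hcon; linarith [hcon]
    have hd2 : 1 - - -1 / (x * y ^ 2) ≠ 0 := by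
      have : (0:ℝ) < 1 - (x * y ^ 2)⁻¹ := by linarith
      intro hcon
      rw [neg_neg, div_eq_inv_mul, mul_one] at hcon
      linarith
    have hd3 : 1 + - -1 / x ≠ 0 := by
      rw [neg_neg]
      intro hcon
      rw [div_eq_inv_mul, mul_one] at hcon
      linarith
    rw [div_mul_div_comm, div_eq_div_iff hd1 (mul_ne_zero hd2 hd3)]
    field_simp
    ring

lemma eps_bounds {a : ℝ} (ha : 1 < a) {i : ℕ} (hi : 1 ≤ i) :
    0 < 1 + eps a i ∧ 0 < 1 - eps a i := by
  have h1 : |eps a i| < 1 := by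
    rw [abs_eps]
    exact pow_lt_one₀ (le_of_lt (r_pos ha)) (r_lt_one ha) (by omega)
  have := abs_lt.1 h1
  constructor <;> linarith [this.1, this.2]

lemma exp_uu_sub {a : ℝ} (ha : 1 < a) {p s : ℕ} (hp : 1 ≤ p) (hs : 1 ≤ s) :
    Real.exp (uu a p - uu a s) =
      (1 + eps a p) / (1 - eps a p) * ((1 - eps a s) / (1 + eps a s)) := by
  obtain ⟨hp1, hp2⟩ := eps_bounds ha hp
  obtain ⟨hs1, hs2⟩ := eps_bounds ha hs
  rw [uu, uu, show Real.log (1 + eps a p) - Real.log (1 - eps a p) -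
      (Real.log (1 + eps a s) - Real.log (1 - eps a s)) =
      (Real.log (1 + eps a p) + Real.log (1 - eps a s)) -
      (Real.log (1 - eps a p) + Real.log (1 + eps a s)) from by ring,
    Real.exp_sub, Real.exp_add, Real.exp_add, Real.exp_log hp1, Real.exp_log hp2,
    Real.exp_log hs1, Real.exp_log hs2, div_mul_div_comm]

lemma exp_neg_uu {a : ℝ} (ha : 1 < a) {i : ℕ} (hi : 1 ≤ i) :
    Real.exp (-uu a i) = (1 - eps a i) / (1 + eps a i) := by
  obtain ⟨h1, h2⟩ := eps_bounds ha hi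
  rw [uu, neg_sub, Real.exp_sub, Real.exp_log h1, Real.exp_log h2]

lemma reindex (f : ℕ → ℝ) : ∀ q : ℕ,
    ∏ k ∈ Finset.range (2 * q), f (k + 1) = ∏ k ∈ Finset.Icc 1 q, (f (2 * k - 1) * f (2 * k))
  | 0 => by simp
  | (q+1) => by
      rw [show 2 * (q+1) = 2*q + 1 + 1 from by ring, Finset.prod_range_succ,
        Finset.prod_range_succ, reindex f q,
        Finset.prod_Icc_succ_top (Nat.succ_le_succ (Nat.zero_le q))]
      have h1 : 2 * (q+1) - 1 = 2*q + 1 := by omega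
      have h2 : 2 * (q+1) = 2*q + 1 + 1 := by omega
      rw [h1, h2]
      ring

lemma pow_mul_inv_sq_pow {a : ℝ} (ha : 1 < a) (i : ℕ) :
    a ^ i * ((a ^ 2)⁻¹) ^ i = (a⁻¹) ^ i := by
  have ha0 : a ≠ 0 := by positivity
  rw [← mul_pow]
  congr 1
  field_simp

lemma fib_eq {a : ℝ} (m : ℕ) (hm : Odd m) (ha : a = φ ^ m) (ham : 1 < a) (i : ℕ) :
    (Nat.fib (m * i) : ℝ) = a ^ i * (1 - eps a i) / √5 := by
  have hpsi : (ψ : ℝ) ^ m = -a⁻¹ := by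
    have h1 : (ψ : ℝ) = -φ⁻¹ := by rw [inv_goldenRatio, neg_neg]
    rw [h1, hm.neg_pow, inv_pow, ← ha]
  rw [Real.coe_fib_eq, pow_mul, pow_mul, hpsi, ← ha, neg_pow]
  congr 1
  rw [eps]
  linear_combination ((-1:ℝ)^i) * (pow_mul_inv_sq_pow ham i)

lemma lucas_eq {a : ℝ} (m : ℕ) (hm : Odd m) (ha : a = φ ^ m) (ham : 1 < a) (i : ℕ) :
    (lucas (m * i) : ℝ) = a ^ i * (1 + eps a i) := by
  have hpsi : (ψ : ℝ) ^ m = -a⁻¹ := by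
    have h1 : (ψ : ℝ) = -φ⁻¹ := by rw [inv_goldenRatio, neg_neg]
    rw [h1, hm.neg_pow, inv_pow, ← ha]
  rw [lucas_binet, pow_mul, pow_mul, hpsi, ← ha, neg_pow]
  rw [eps]
  linear_combination (-(-1:ℝ)^i) * (pow_mul_inv_sq_pow ham i)

lemma quot5 (N D : ℝ) : (N / √5) / (D / √5) = N / D := by
  have hs5 : (0:ℝ) < √5 := by positivity
  rw [div_div_div_comm, div_self (ne_of_gt hs5), div_one]

theorem stmt_18 (q n : ℕ) (hq : 0 < q) (hn : 0 < n) :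
    ∏' k : ℕ,
        ((Nat.fib ((2 * n - 1) * (2 * q + 2 * (k + 1))) : ℝ) +
            (-1 : ℝ) ^ ((k + 1) - 1) * (Nat.fib ((2 * n - 1) * (2 * q)) : ℝ)) /
          ((Nat.fib ((2 * n - 1) * (2 * q + 2 * (k + 1))) : ℝ) +
            (-1 : ℝ) ^ (k + 1) * (Nat.fib ((2 * n - 1) * (2 * q)) : ℝ)) =
      (5 : ℝ) ^ q *
        ∏ k ∈ Finset.Icc 1 q,
          ((Nat.fib ((2 * n - 1) * (2 * k - 1)) : ℝ) * (Nat.fib ((2 * n - 1) * (2 * k)) : ℝ)) /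
            ((lucas ((2 * n - 1) * (2 * k - 1)) : ℝ) * (lucas ((2 * n - 1) * (2 * k)) : ℝ)) := by
  set m := 2 * n - 1 with hmdef
  have hmodd : Odd m := ⟨n - 1, by omega⟩
  set a := φ ^ m with hadef
  have ha : 1 < a := one_lt_pow₀ one_lt_goldenRatio (by omega)
  have ha2 : 1 < a ^ 2 := by nlinarith
  have hfib := fib_eq m hmodd hadef ha
  have hluc := lucas_eq m hmodd hadef ha
  have hs5 : (0:ℝ) < √5 := by positivity
  have hneg : ∀ j : ℕ, (-1:ℝ)^(j*2) = 1 := fun j => by rw [pow_mul', neg_one_sq, one_pow]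
  have hterm : ∀ k : ℕ,
      ((Nat.fib (m * (2*q + 2*(k+1))) : ℝ) + (-1:ℝ)^((k+1)-1) * (Nat.fib (m*(2*q)):ℝ)) /
      ((Nat.fib (m * (2*q + 2*(k+1))) : ℝ) + (-1:ℝ)^(k+1) * (Nat.fib (m*(2*q)):ℝ))
      = Real.exp (uu a (2*q + k + 1) - uu a (k+1)) := by
    intro k
    simp only [Nat.add_sub_cancel]
    set x := (a^2)^(k+1) with hx
    set y := (a^2)^q with hy
    have hxx : 1 < x := one_lt_pow₀ ha2 (by omega)
    have hyy : 1 < y := one_lt_pow₀ ha2 (by omega)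
    have e_big : a ^ (2*q + 2*(k+1)) = x * y := by rw [hx, hy]; ring
    have e_y : a ^ (2*q) = y := by rw [hy]; ring
    have e_eps_big : eps a (2*q + 2*(k+1)) = ((x*y)^2)⁻¹ := by
      rw [eps, hx, hy]; ring_nf; simp only [hneg, one_mul, mul_one]
    have e_eps_y : eps a (2*q) = ((y)^2)⁻¹ := by
      rw [eps, hy]; ring_nf; simp only [hneg, one_mul, mul_one]
    have e_eps_s : eps a (k+1) = -(-1:ℝ)^k / x := by
      rw [eps, hx]; ring
    have e_eps_p : eps a (2*q + k + 1) = -(-1:ℝ)^k / (x * y^2) := by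
      rw [eps, hx, hy]; ring_nf; simp only [hneg, one_mul, mul_one]
    rw [hfib (2*q + 2*(k+1)), hfib (2*q), e_big, e_y, e_eps_big, e_eps_y,
      exp_uu_sub ha (by omega) (by omega), e_eps_p, e_eps_s,
      show x*y*(1-((x*y)^2)⁻¹)/√5 + (-1:ℝ)^k * (y*(1-(y^2)⁻¹)/√5)
        = (x*y*(1-((x*y)^2)⁻¹) + (-1:ℝ)^k*(y*(1-(y^2)⁻¹)))/√5 from by ring,
      show x*y*(1-((x*y)^2)⁻¹)/√5 + (-1:ℝ)^(k+1) * (y*(1-(y^2)⁻¹)/√5)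
        = (x*y*(1-((x*y)^2)⁻¹) - (-1:ℝ)^k*(y*(1-(y^2)⁻¹)))/√5 from by rw [pow_succ]; ring,
      quot5]
    exact per x y ((-1:ℝ)^k) hxx hyy
      (by rcases Nat.even_or_odd k with h | h
          · left; exact h.neg_one_pow
          · right; exact h.neg_one_pow)
  rw [tprod_congr hterm, (key ha q).tprod_eq, ← Finset.sum_neg_distrib, Real.exp_sum]
  have hfactor : ∀ k ∈ Finset.range (2*q), Real.exp (-uu a (k+1))
      = √5 * ((Nat.fib (m*(k+1)) : ℝ) / (lucas (m*(k+1)) : ℝ)) := by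
    intro k _
    obtain ⟨h1, h2⟩ := eps_bounds ha (show 1 ≤ k+1 by omega)
    have h3 : a^(k+1) ≠ 0 := by positivity
    rw [exp_neg_uu ha (by omega), hfib (k+1), hluc (k+1)]
    field_simp
  rw [Finset.prod_congr rfl hfactor, Finset.prod_mul_distrib, Finset.prod_const,
    Finset.card_range,
    show (√5)^(2*q) = (5:ℝ)^q from by rw [pow_mul, Real.sq_sqrt (by norm_num : (0:ℝ) ≤ 5)]]
  congr 1
  rw [reindex (fun j => (Nat.fib (m*j) : ℝ) / (lucas (m*j) : ℝ)) q]
  exact Finset.prod_congr rfl fun k _ => div_mul_div_comm _ _ _ _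
end
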